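/- Let H ≤ G be a malnormal subgroup of finite index and let S be a generating multiset of G of size [G:H]. Then S is Nielsen equivalent to a left-right transversal of H in G. -/

import Mathlib

open scoped Classical

section Defs

variable {G : Type*} [Group G]

/-- A single Nielsen move on a finite multiset of group elements: replace one
occurrence of `g` by `g⁻¹`, or by `h * g` or `g * h` where `h` is another
occurrence in the multiset. -/
def NielsenMove (S T : Multiset G) : Prop :=
  (∃ g ∈ S, T = g⁻¹ ::ₘ S.erase g) ∨
    (∃ g ∈ S, ∃ h ∈ S.erase g, T = h * g ::ₘ S.erase g ∨ T = g * h ::ₘ S.erase g)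

/-- Nielsen equivalence: one multiset is obtained from the other by a finite
sequence of Nielsen moves. -/
def NielsenEquiv (S T : Multiset G) : Prop :=
  Relation.ReflTransGen NielsenMove S T

/-- The elements of the multiset `S` lie in pairwise distinct left cosets of `H`. -/
def LeftDistinct (H : Subgroup G) (S : Multiset G) : Prop :=
  (S.map fun x => ((x : G) : G ⧸ H)).Nodup

/-- The elements of the multiset `S` lie in pairwise distinct right cosets of `H`
(using that `Hx = Hy ↔ x⁻¹H = y⁻¹H`). -/
def RightDistinct (H : Subgroup G) (S : Multiset G) : Prop :=
  (S.map fun x => ((x⁻¹ : G) : G ⧸ H)).Nodup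

/-- `T` is a left transversal of `H`: it contains exactly one element of each
left coset of `H`. -/
def IsLeftTransversal (H : Subgroup G) (T : Set G) : Prop :=
  ∀ g : G, ∃! t, t ∈ T ∧ ((t : G) : G ⧸ H) = ((g : G) : G ⧸ H)

/-- `T` is a right transversal of `H`: it contains exactly one element of each
right coset of `H` (using that `Hx = Hy ↔ x⁻¹H = y⁻¹H`). -/
def IsRightTransversal (H : Subgroup G) (T : Set G) : Prop :=
  ∀ g : G, ∃! t, t ∈ T ∧ ((t⁻¹ : G) : G ⧸ H) = ((g⁻¹ : G) : G ⧸ H)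

/-- The left coset `aH` as a set. -/
def lcoset (a : G) (H : Subgroup G) : Set G := {x | a⁻¹ * x ∈ H}

/-- The right coset `Ha` as a set. -/
def rcoset (H : Subgroup G) (a : G) : Set G := {x | x * a⁻¹ ∈ H}

/-- The double coset `HgH` as a set. -/
def dcoset (H : Subgroup G) (g : G) : Set G := {x | ∃ h₁ ∈ H, ∃ h₂ ∈ H, x = h₁ * g * h₂}

/-- `S` is left-right clean relative to `H`: `S ∖ H` is nonempty and its elements
lie in pairwise distinct left cosets and pairwise distinct right cosets of `H`. -/
def LeftRightClean (H : Subgroup G) (S : Multiset G) : Prop :=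
  (∃ x ∈ S, x ∉ H) ∧
    LeftDistinct H (S.filter fun x => x ∉ H) ∧
    RightDistinct H (S.filter fun x => x ∉ H)

end Defs
section M1

variable {G : Type*} [Group G]

theorem NielsenEquiv.trans {S T U : Multiset G} (h1 : NielsenEquiv S T) (h2 : NielsenEquiv T U) :
    NielsenEquiv S U := Relation.ReflTransGen.trans h1 h2

theorem NielsenEquiv.of_eq {S T : Multiset G} (h : S = T) : NielsenEquiv S T := by
  rw [h]; exact Relation.ReflTransGen.refl

theorem nielsenMove_inv_cons (s : Multiset G) (g : G) :
    NielsenMove (g ::ₘ s) (g⁻¹ ::ₘ s) := by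
  left
  exact ⟨g, Multiset.mem_cons_self g s, by rw [Multiset.erase_cons_head]⟩

theorem nielsenMove_lmul_cons (s : Multiset G) (g h : G) (hh : h ∈ s) :
    NielsenMove (g ::ₘ s) (h * g ::ₘ s) := by
  right
  refine ⟨g, Multiset.mem_cons_self g s, h, ?_, Or.inl (by rw [Multiset.erase_cons_head])⟩
  rw [Multiset.erase_cons_head]; exact hh

theorem nielsenMove_rmul_cons (s : Multiset G) (g h : G) (hh : h ∈ s) :
    NielsenMove (g ::ₘ s) (g * h ::ₘ s) := by
  right
  refine ⟨g, Multiset.mem_cons_self g s, h, ?_, Or.inr (by rw [Multiset.erase_cons_head])⟩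
  rw [Multiset.erase_cons_head]; exact hh

/-- single move reversal -/
theorem NielsenMove.rev {S T : Multiset G} (h : NielsenMove S T) : NielsenEquiv T S := by
  rcases h with ⟨g, hg, rfl⟩ | ⟨g, hg, h, hh, rfl | rfl⟩
  · refine Relation.ReflTransGen.single (Or.inl ⟨g⁻¹, Multiset.mem_cons_self _ _, ?_⟩)
    rw [Multiset.erase_cons_head, inv_inv, Multiset.cons_erase hg]
  · set R' := (S.erase g).erase h with hR'
    have hR : S.erase g = h ::ₘ R' := (Multiset.cons_erase hh).symm
    have hS : S = g ::ₘ h ::ₘ R' := by rw [← hR, Multiset.cons_erase hg]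
    rw [hR]
    have s0 : NielsenEquiv (h * g ::ₘ h ::ₘ R') (h ::ₘ h * g ::ₘ R') :=
      NielsenEquiv.of_eq (Multiset.cons_swap _ _ _)
    have s1 : NielsenEquiv (h ::ₘ h * g ::ₘ R') (h⁻¹ ::ₘ h * g ::ₘ R') :=
      Relation.ReflTransGen.single (nielsenMove_inv_cons _ _)
    have s2 : NielsenEquiv (h⁻¹ ::ₘ h * g ::ₘ R') (h * g ::ₘ h⁻¹ ::ₘ R') :=
      NielsenEquiv.of_eq (Multiset.cons_swap _ _ _)
    have s3 : NielsenEquiv (h * g ::ₘ h⁻¹ ::ₘ R') (h⁻¹ * (h * g) ::ₘ h⁻¹ ::ₘ R') :=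
      Relation.ReflTransGen.single
        (nielsenMove_lmul_cons _ _ _ (Multiset.mem_cons_self _ _))
    rw [inv_mul_cancel_left] at s3
    have s4 : NielsenEquiv (g ::ₘ h⁻¹ ::ₘ R') (h⁻¹ ::ₘ g ::ₘ R') :=
      NielsenEquiv.of_eq (Multiset.cons_swap _ _ _)
    have s5 : NielsenEquiv (h⁻¹ ::ₘ g ::ₘ R') (h⁻¹⁻¹ ::ₘ g ::ₘ R') :=
      Relation.ReflTransGen.single (nielsenMove_inv_cons _ _)
    rw [inv_inv] at s5
    have s6 : NielsenEquiv (h ::ₘ g ::ₘ R') S :=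
      NielsenEquiv.of_eq (by rw [hS, Multiset.cons_swap])
    exact s0.trans (s1.trans (s2.trans (s3.trans (s4.trans (s5.trans s6)))))
  · set R' := (S.erase g).erase h with hR'
    have hR : S.erase g = h ::ₘ R' := (Multiset.cons_erase hh).symm
    have hS : S = g ::ₘ h ::ₘ R' := by rw [← hR, Multiset.cons_erase hg]
    rw [hR]
    have s0 : NielsenEquiv (g * h ::ₘ h ::ₘ R') (h ::ₘ g * h ::ₘ R') :=
      NielsenEquiv.of_eq (Multiset.cons_swap _ _ _)
    have s1 : NielsenEquiv (h ::ₘ g * h ::ₘ R') (h⁻¹ ::ₘ g * h ::ₘ R') :=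
      Relation.ReflTransGen.single (nielsenMove_inv_cons _ _)
    have s2 : NielsenEquiv (h⁻¹ ::ₘ g * h ::ₘ R') (g * h ::ₘ h⁻¹ ::ₘ R') :=
      NielsenEquiv.of_eq (Multiset.cons_swap _ _ _)
    have s3 : NielsenEquiv (g * h ::ₘ h⁻¹ ::ₘ R') ((g * h) * h⁻¹ ::ₘ h⁻¹ ::ₘ R') :=
      Relation.ReflTransGen.single
        (nielsenMove_rmul_cons _ _ _ (Multiset.mem_cons_self _ _))
    rw [mul_inv_cancel_right] at s3
    have s4 : NielsenEquiv (g ::ₘ h⁻¹ ::ₘ R') (h⁻¹ ::ₘ g ::ₘ R') :=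
      NielsenEquiv.of_eq (Multiset.cons_swap _ _ _)
    have s5 : NielsenEquiv (h⁻¹ ::ₘ g ::ₘ R') (h⁻¹⁻¹ ::ₘ g ::ₘ R') :=
      Relation.ReflTransGen.single (nielsenMove_inv_cons _ _)
    rw [inv_inv] at s5
    have s6 : NielsenEquiv (h ::ₘ g ::ₘ R') S :=
      NielsenEquiv.of_eq (by rw [hS, Multiset.cons_swap])
    exact s0.trans (s1.trans (s2.trans (s3.trans (s4.trans (s5.trans s6)))))

theorem NielsenEquiv.symm {S T : Multiset G} (h : NielsenEquiv S T) : NielsenEquiv T S := by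
  induction h with
  | refl => exact Relation.ReflTransGen.refl
  | tail _ hbc ih => exact (hbc.rev).trans ih

theorem nielsen_mul_closure (s : Multiset G) {w : G}
    (hw : w ∈ Subgroup.closure {x : G | x ∈ s}) :
    ∀ c : G, NielsenEquiv (c ::ₘ s) (w * c ::ₘ s) := by
  induction hw using Subgroup.closure_induction with
  | mem x hx => exact fun c => Relation.ReflTransGen.single (nielsenMove_lmul_cons s c x hx)
  | one => intro c; rw [one_mul]; exact Relation.ReflTransGen.refl
  | mul w₁ w₂ _ _ ih₁ ih₂ =>
    intro c
    have := (ih₂ c).trans (ih₁ (w₂ * c))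
    rwa [← mul_assoc] at this
  | inv w _ ih =>
    intro c
    have := ih (w⁻¹ * c)
    rw [mul_inv_cancel_left] at this
    exact this.symm

theorem nielsen_replace (s : Multiset G)
    (hgen : Subgroup.closure {x : G | x ∈ s} = ⊤) (a v : G) :
    NielsenEquiv (a ::ₘ s) (v ::ₘ s) := by
  have hw : v * a⁻¹ ∈ Subgroup.closure {x : G | x ∈ s} := by rw [hgen]; trivial
  have := nielsen_mul_closure s hw a
  rwa [inv_mul_cancel_right] at this

end M1




section M2
variable {G : Type*} [Group G]

theorem card_double_of_lt [Finite G] {K K' : Subgroup G} (h : K < K') :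
    2 * Nat.card K ≤ Nat.card K' := by
  obtain ⟨m, hm⟩ := Subgroup.card_dvd_of_le h.le
  have hKpos : 0 < Nat.card K := Nat.card_pos
  have hK'pos : 0 < Nat.card K' := Nat.card_pos
  have hm2 : 2 ≤ m := by
    by_contra hc
    push_neg at hc
    interval_cases m
    · rw [mul_zero] at hm
      omega
    · rw [mul_one] at hm
      exact absurd (Subgroup.eq_of_le_of_card_ge h.le hm.le) h.ne
  calc 2 * Nat.card K ≤ Nat.card K * m := by nlinarith
  _ = Nat.card K' := hm.symm

/-- chain condition on a list of generators -/
def ChainCond {G : Type*} [Group G] (l : List G) : Prop :=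
  ∀ i (hi : i < l.length), Subgroup.closure {x : G | x ∈ l.take i} = ⊤ ∨
    l.get ⟨i, hi⟩ ∉ Subgroup.closure {x : G | x ∈ l.take i}

theorem take_subset_take_succ (l : List G) (i : ℕ) : l.take i ⊆ l.take (i+1) := by
  intro z hz
  have : z ∈ List.take i (List.take (i+1) l) := by
    rw [List.take_take, min_eq_left (by omega)]
    exact hz
  exact List.take_subset _ _ this

theorem get_mem_take_succ (l : List G) (i : ℕ) (hi : i < l.length) :
    l.get ⟨i, hi⟩ ∈ l.take (i+1) := by
  rw [List.take_succ]
  apply List.mem_append_right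
  rw [List.getElem?_eq_getElem hi]
  simp

theorem get_mem_drop (l : List G) (i : ℕ) (hi : i < l.length) :
    l.get ⟨i, hi⟩ ∈ l.drop i := by
  have h0 : 0 < (l.drop i).length := by
    rw [List.length_drop]
    omega
  have : (l.drop i)[0] = l.get ⟨i, hi⟩ := by
    rw [List.getElem_drop]
    simp
  rw [← this]
  exact List.getElem_mem h0

theorem chain_card [Finite G] {l : List G} (hc : ChainCond l) :
    ∀ i, i ≤ l.length →
      Subgroup.closure {x : G | x ∈ l.take i} = ⊤ ∨
      2 ^ i ≤ Nat.card (Subgroup.closure {x : G | x ∈ l.take i}) := by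
  intro i
  induction i with
  | zero =>
    intro _
    right
    simpa using Nat.card_pos
  | succ i ih =>
    intro hi1
    have hi : i < l.length := lt_of_lt_of_le (Nat.lt_succ_self i) hi1
    have hmono : Subgroup.closure {x : G | x ∈ l.take i} ≤
        Subgroup.closure {x : G | x ∈ l.take (i+1)} :=
      Subgroup.closure_mono (fun z hz => take_subset_take_succ l i hz)
    rcases ih (le_of_lt hi) with htop | hcard
    · left
      exact top_unique (htop ▸ hmono)
    · rcases hc i hi with htop | hnot
      · left
        exact top_unique (htop ▸ hmono)
      · right
        have hmem : l.get ⟨i, hi⟩ ∈ Subgroup.closure {x : G | x ∈ l.take (i+1)} :=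
          Subgroup.subset_closure (get_mem_take_succ l i hi)
        have hlt : Subgroup.closure {x : G | x ∈ l.take i} <
            Subgroup.closure {x : G | x ∈ l.take (i+1)} :=
          lt_of_le_of_ne hmono (fun he => hnot (he ▸ hmem))
        calc 2 ^ (i+1) = 2 * 2 ^ i := by ring
        _ ≤ 2 * Nat.card (Subgroup.closure {x : G | x ∈ l.take i}) := by omega
        _ ≤ _ := card_double_of_lt hlt

/-- every finite set of generators contains an irredundant generating list -/
theorem exists_irred_list : ∀ (n : ℕ) (X : Finset G), X.card = n →
    ∃ l : List G, l.Nodup ∧ (∀ x ∈ l, x ∈ X) ∧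
      Subgroup.closure {x : G | x ∈ l} = Subgroup.closure (X : Set G) ∧
      ∀ i (hi : i < l.length), l.get ⟨i, hi⟩ ∉ Subgroup.closure {x : G | x ∈ l.take i} := by
  intro n
  induction n using Nat.strong_induction_on with
  | _ n ih =>
  intro X hX
  by_cases hred : ∃ x ∈ X, Subgroup.closure ((X.erase x : Finset G) : Set G) =
      Subgroup.closure (X : Set G)
  · obtain ⟨x, hxX, hcl⟩ := hred
    have hcard : (X.erase x).card < n := by
      rw [← hX]
      exact Finset.card_erase_lt_of_mem hxX
    obtain ⟨l, h1, h2, h3, h4⟩ := ih _ hcard (X.erase x) rfl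
    exact ⟨l, h1, fun y hy => Finset.mem_of_mem_erase (h2 y hy), h3.trans hcl, h4⟩
  · push_neg at hred
    refine ⟨X.toList, Finset.nodup_toList X, fun y hy => Finset.mem_toList.mp hy, ?_, ?_⟩
    · congr 1
      ext y
      simp [Finset.mem_toList]
    · intro i hi hmem
      set l := X.toList with hl
      set x := l.get ⟨i, hi⟩ with hx
      have hxX : x ∈ X := Finset.mem_toList.mp (l.get_mem _)
      have hnd : l.Nodup := Finset.nodup_toList X
      have hnd2 : (l.take i ++ l.drop i).Nodup := by
        rw [List.take_append_drop]
        exact hnd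
      have hdisj := (List.nodup_append.mp hnd2).2.2
      have hxdrop : x ∈ l.drop i := get_mem_drop l i hi
      have hsub : {z : G | z ∈ l.take i} ⊆ ((X.erase x : Finset G) : Set G) := by
        intro z hz
        simp only [Set.mem_setOf_eq] at hz
        rw [Finset.coe_erase]
        refine ⟨Finset.mem_toList.mp (List.take_subset _ _ hz), ?_⟩
        intro he
        rw [Set.mem_singleton_iff] at he
        subst he
        exact hdisj _ hz _ hxdrop rfl
      have hle : Subgroup.closure {z : G | z ∈ l.take i} ≤
          Subgroup.closure ((X.erase x : Finset G) : Set G) :=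
        Subgroup.closure_mono hsub
      have hXsub : (X : Set G) ⊆ Subgroup.closure ((X.erase x : Finset G) : Set G) := by
        intro y hy
        by_cases hyx : y = x
        · rw [hyx]
          exact hle hmem
        · exact Subgroup.subset_closure (by
            rw [Finset.coe_erase]
            exact ⟨hy, hyx⟩)
      have heq : Subgroup.closure ((X.erase x : Finset G) : Set G) =
          Subgroup.closure (X : Set G) := by
        apply le_antisymm
        · apply Subgroup.closure_mono
          rw [Finset.coe_erase]
          exact Set.diff_subset
        · exact (Subgroup.closure_le _).mpr hXsub
      exact hred x hxX heq
end M2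
section M3
variable {G : Type*} [Group G]

theorem closure_mono_set {A B : Set G} (h : A ⊆ B) :
    Subgroup.closure A ≤ Subgroup.closure B := Subgroup.closure_mono h

/-- free slot existence -/
theorem free_exists [Finite G] (l : List G) (hchain : ChainCond l)
    (hGlt : Nat.card G < 2 ^ l.length) (i : ℕ) (hi : i ≤ l.length)
    (U : Multiset G) (hU : U.card = l.length - i) (hUpos : 0 < U.card)
    (hgen : Subgroup.closure {x : G | x ∈ (↑(l.take i) : Multiset G) + U} = ⊤) :
    ∃ u ∈ U, Subgroup.closure {x : G | x ∈ (↑(l.take i) : Multiset G) + U.erase u} = ⊤ := by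
  have hU0 : U ≠ 0 := by
    intro h
    rw [h] at hUpos
    simp at hUpos
  obtain ⟨u0, hu0⟩ := Multiset.exists_mem_of_ne_zero hU0
  by_cases htop : Subgroup.closure {x : G | x ∈ l.take i} = ⊤
  · refine ⟨u0, hu0, ?_⟩
    apply top_unique
    rw [← htop]
    apply closure_mono_set
    intro z hz
    simp only [Set.mem_setOf_eq] at hz ⊢
    rw [Multiset.mem_add]
    left
    exact Multiset.mem_coe.mpr hz
  · have hcard2 : 2 ^ i ≤ Nat.card (Subgroup.closure {x : G | x ∈ l.take i}) := by
      rcases chain_card hchain i hi with h | h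
      · exact absurd h htop
      · exact h
    by_contra hno
    push_neg at hno
    set us := U.toList with hus
    have husU : (↑us : Multiset G) = U := Multiset.coe_toList U
    have hlen : us.length = U.card := Multiset.length_toList U
    let N : ℕ → Subgroup G := fun r => Subgroup.closure {x : G | x ∈ l.take i ++ us.take r}
    have hNdef : ∀ r, N r = Subgroup.closure {x : G | x ∈ l.take i ++ us.take r} :=
      fun r => rfl
    have herase : ∀ r (hr : r < us.length),
        U.erase (us.get ⟨r, hr⟩) = ↑(us.take r) + ↑(us.drop (r+1)) := by
      intro r hr
      have hsplit : us = us.take r ++ us.get ⟨r, hr⟩ :: us.drop (r+1) := by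
        conv_lhs => rw [← List.take_append_drop r us]
        congr 1
        rw [List.drop_eq_getElem_cons hr]
        simp
      have : U = us.get ⟨r, hr⟩ ::ₘ (↑(us.take r) + ↑(us.drop (r+1))) := by
        rw [← husU]
        conv_lhs => rw [hsplit]
        simp only [← Multiset.cons_coe, ← Multiset.coe_add]
        rw [Multiset.add_cons]
      rw [this, Multiset.erase_cons_head]
    have hstrict : ∀ r (hr : r < us.length), N r < N (r+1) := by
      intro r hr
      set u := us.get ⟨r, hr⟩ with hu
      have humem : u ∈ U := by
        rw [← husU]
        exact Multiset.mem_coe.mpr (us.get_mem _)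
      have hmono : N r ≤ N (r+1) := by
        apply closure_mono_set
        intro z hz
        simp only [Set.mem_setOf_eq, List.mem_append] at hz ⊢
        rcases hz with h | h
        · exact Or.inl h
        · exact Or.inr (take_subset_take_succ us r h)
      have humem1 : u ∈ N (r+1) := by
        apply Subgroup.subset_closure
        simp only [Set.mem_setOf_eq, List.mem_append]
        exact Or.inr (get_mem_take_succ us r hr)
      refine lt_of_le_of_ne hmono (fun he => ?_)
      -- if N r = N (r+1) then u ∈ N r, contradiction with hno
      have humemNr : u ∈ N r := he ▸ humem1
      have hle : N r ≤ Subgroup.closure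
          {x : G | x ∈ (↑(l.take i) : Multiset G) + U.erase u} := by
        apply closure_mono_set
        intro z hz
        simp only [Set.mem_setOf_eq, List.mem_append] at hz ⊢
        rw [Multiset.mem_add]
        rcases hz with h | h
        · exact Or.inl (Multiset.mem_coe.mpr h)
        · right
          rw [herase r hr]
          rw [Multiset.mem_add]
          exact Or.inl (Multiset.mem_coe.mpr h)
      have hLtop : Subgroup.closure {x : G | x ∈ (↑(l.take i) : Multiset G) + U.erase u} = ⊤ := by
        apply top_unique
        rw [← hgen]
        rw [Subgroup.closure_le]
        intro z hz
        simp only [Set.mem_setOf_eq, Multiset.mem_add] at hz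
        rcases hz with h | h
        · exact Subgroup.subset_closure (by
            simp only [Set.mem_setOf_eq, Multiset.mem_add]
            exact Or.inl h)
        · by_cases hzu : z = u
          · rw [hzu]
            exact hle humemNr
          · refine Subgroup.subset_closure ?_
            simp only [Set.mem_setOf_eq, Multiset.mem_add]
            right
            exact (Multiset.mem_erase_of_ne hzu).mpr h
      exact hno u humem hLtop
    -- doubling
    have hN0 : 2 ^ i ≤ Nat.card (N 0) := by
      have he : N 0 = Subgroup.closure {x : G | x ∈ l.take i} := by
        rw [hNdef]
        congr 1
        ext z
        simp
      rw [he]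
      exact hcard2
    have hdouble : ∀ r, r ≤ us.length → 2 ^ (i + r) ≤ Nat.card (N r) := by
      intro r
      induction r with
      | zero =>
        intro _
        rw [Nat.add_zero]
        exact hN0
      | succ r ihr =>
        intro hr1
        have hr : r < us.length := by omega
        calc 2 ^ (i + (r+1)) = 2 * 2 ^ (i + r) := by ring
        _ ≤ 2 * Nat.card (N r) := by
            have := ihr (le_of_lt hr)
            omega
        _ ≤ Nat.card (N (r+1)) := card_double_of_lt (hstrict r hr)
    have hfin := hdouble us.length (le_refl _)
    have hNlast : N us.length = ⊤ := by
      apply top_unique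
      rw [hNdef, ← hgen, Subgroup.closure_le]
      intro z hz
      simp only [Set.mem_setOf_eq, Multiset.mem_add] at hz
      apply Subgroup.subset_closure
      simp only [Set.mem_setOf_eq, List.mem_append, List.take_length]
      rcases hz with h | h
      · exact Or.inl (Multiset.mem_coe.mp h)
      · right
        rw [← husU] at h
        exact Multiset.mem_coe.mp h
    rw [hNlast] at hfin
    have hcardtop : Nat.card (⊤ : Subgroup G) = Nat.card G := Subgroup.card_top
    rw [hcardtop] at hfin
    have : i + us.length = l.length := by
      rw [hlen, hU]
      omega
    rw [this] at hfin
    omega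

/-- the rewriting process -/
theorem process [Finite G] (l : List G) (hchain : ChainCond l)
    (hGlt : Nat.card G < 2 ^ l.length) :
    ∀ (d i : ℕ), i + d = l.length → ∀ (U : Multiset G), U.card = d →
      Subgroup.closure {x : G | x ∈ (↑(l.take i) : Multiset G) + U} = ⊤ →
      NielsenEquiv ((↑(l.take i) : Multiset G) + U) ↑l := by
  intro d
  induction d with
  | zero =>
    intro i hi U hU _
    have hU0 : U = 0 := Multiset.card_eq_zero.mp hU
    rw [hU0, add_zero]
    apply NielsenEquiv.of_eq
    congr 1
    rw [Nat.add_zero] at hi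
    rw [hi, List.take_length]
  | succ d ihd =>
    intro i hi U hU hgen
    have hil : i < l.length := by omega
    obtain ⟨u, humem, hfree⟩ := free_exists l hchain hGlt i (le_of_lt hil) U
      (by omega) (by omega) hgen
    set t := l.get ⟨i, hil⟩ with ht
    have heq1 : (↑(l.take i) : Multiset G) + U =
        u ::ₘ ((↑(l.take i) : Multiset G) + U.erase u) := by
      conv_lhs => rw [← Multiset.cons_erase humem]
      rw [Multiset.add_cons]
    have hstep : NielsenEquiv ((↑(l.take i) : Multiset G) + U)
        (t ::ₘ ((↑(l.take i) : Multiset G) + U.erase u)) := by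
      rw [heq1]
      exact nielsen_replace _ hfree u t
    have heq2 : t ::ₘ ((↑(l.take i) : Multiset G) + U.erase u) =
        (↑(l.take (i+1)) : Multiset G) + U.erase u := by
      have htake : l.take (i+1) = l.take i ++ [t] := by
        rw [List.take_succ, List.getElem?_eq_getElem hil]
        rfl
      have hc : (↑(l.take i ++ [t]) : Multiset G) = ↑(l.take i) + {t} := by
        rw [← Multiset.coe_add]
        rfl
      rw [htake, hc, add_assoc, Multiset.singleton_add, Multiset.add_cons]
    have hgen2 : Subgroup.closure
        {x : G | x ∈ (↑(l.take (i+1)) : Multiset G) + U.erase u} = ⊤ := by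
      apply top_unique
      rw [← hfree]
      apply closure_mono_set
      intro z hz
      simp only [Set.mem_setOf_eq, Multiset.mem_add] at hz ⊢
      rcases hz with h | h
      · exact Or.inl (Multiset.mem_coe.mpr (take_subset_take_succ l i (Multiset.mem_coe.mp h)))
      · exact Or.inr h
    have hrec := ihd (i+1) (by omega) (U.erase u)
      (by rw [Multiset.card_erase_of_mem humem, hU]; rfl) hgen2
    rw [heq2] at hstep
    exact hstep.trans hrec
end M3
section M4
variable {G : Type*} [Group G]

/-- The double coset `HgH` as a set. (local copy; final file has it already) -/
def dcoset' (H : Subgroup G) (g : G) : Set G := {x | ∃ h₁ ∈ H, ∃ h₂ ∈ H, x = h₁ * g * h₂}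

variable (H : Subgroup G)

theorem lq_eq_iff (x y : G) : ((x : G ⧸ H) = (y : G ⧸ H)) ↔ x⁻¹ * y ∈ H :=
  QuotientGroup.eq

theorem rq_eq_iff (x y : G) : (((x⁻¹ : G) : G ⧸ H) = ((y⁻¹ : G) : G ⧸ H)) ↔ x * y⁻¹ ∈ H := by
  rw [QuotientGroup.eq, inv_inv]

variable {H}
variable (hmal : ∀ g : G, g ∉ H → ∀ x ∈ H, g * x * g⁻¹ ∈ H → x = 1)

include hmal in
/-- malnormal cancellation: `g x g⁻¹ ∈ H` with `x ∈ H`, `g ∉ H` forces `x = 1`,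
    in the convenient form with the conjugator on either side. -/
theorem mal_cancel {g x : G} (hg : g ∉ H) (hx : x ∈ H) (h : g * x * g⁻¹ ∈ H) : x = 1 :=
  hmal g hg x hx h

include hmal in
theorem mal_cancel' {g x : G} (hg : g ∉ H) (hx : x ∈ H) (h : g⁻¹ * x * g ∈ H) : x = 1 := by
  have hginv : g⁻¹ ∉ H := fun hc => hg (by simpa using H.inv_mem hc)
  exact hmal g⁻¹ hginv x hx (by simpa using h)

include hmal in
/-- completion of a partial left-right transversal -/
theorem completion [Finite G] :
    ∀ (k : ℕ) (P : Finset G),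
      H.index - P.card = k →
      P.card ≤ H.index →
      Set.InjOn (fun x : G => ((x : G ⧸ H))) ↑P →
      Set.InjOn (fun x : G => ((x⁻¹ : G) : G ⧸ H)) ↑P →
      (∃ x ∈ P, x ∈ H) →
      ∃ T : Finset G, P ⊆ T ∧ T.card = H.index ∧
        Set.InjOn (fun x : G => ((x : G ⧸ H))) ↑T ∧
        Set.InjOn (fun x : G => ((x⁻¹ : G) : G ⧸ H)) ↑T ∧
        (∃ x ∈ T, x ∈ H) := by
  haveI : Fintype G := Fintype.ofFinite G
  haveI : Fintype (G ⧸ H) := Fintype.ofFinite _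
  have hidx : H.index = Fintype.card (G ⧸ H) := by
    rw [Subgroup.index, Nat.card_eq_fintype_card]
  intro k
  induction k with
  | zero =>
    intro P hk hle hLD hRD hH
    have hcard : P.card = H.index := by omega
    exact ⟨P, Finset.Subset.refl P, hcard, hLD, hRD, hH⟩
  | succ k ihk =>
    intro P hk hle hLD hRD hH
    have hlt : P.card < H.index := by omega
    -- find a missing left coset
    have himg : (P.image (fun x : G => ((x : G ⧸ H)))).card < Fintype.card (G ⧸ H) := by
      calc (P.image _).card ≤ P.card := Finset.card_image_le
      _ < H.index := hlt
      _ = _ := hidx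
    obtain ⟨q, hq⟩ : ∃ q : G ⧸ H, q ∉ P.image (fun x : G => ((x : G ⧸ H))) := by
      by_contra hc
      push_neg at hc
      have : (Finset.univ : Finset (G ⧸ H)) ⊆ P.image (fun x : G => ((x : G ⧸ H))) :=
        fun q _ => hc q
      have := Finset.card_le_card this
      rw [Finset.card_univ] at this
      omega
    obtain ⟨r, rfl⟩ := QuotientGroup.mk_surjective q
    obtain ⟨x₀, hx₀P, hx₀H⟩ := hH
    have hrH : r ∉ H := by
      intro hrmem
      apply hq
      rw [Finset.mem_image]
      refine ⟨x₀, hx₀P, ?_⟩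
      rw [lq_eq_iff]
      exact H.mul_mem (H.inv_mem hx₀H) hrmem
    -- find h₂ with right coset of r*h₂ missing
    have hmissing : ∃ h₂ ∈ H, ∀ p ∈ P,
        (((p⁻¹ : G)) : G ⧸ H) ≠ (((r * h₂)⁻¹ : G) : G ⧸ H) := by
      by_contra hc
      push_neg at hc
      -- build injections
      set HF : Finset G := Set.toFinset (H : Set G) with hHF
      have hmemHF : ∀ x : G, x ∈ HF ↔ x ∈ H := by
        intro x
        rw [hHF, Set.mem_toFinset]
        rfl
      have hchoice : ∀ h ∈ HF, ∃ p ∈ P, ((p⁻¹ : G) : G ⧸ H) = (((r * h)⁻¹ : G) : G ⧸ H) := by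
        intro h hh
        exact hc h ((hmemHF h).mp hh)
      choose ψ hψP hψeq using hchoice
      set Q : Finset G := P.filter (fun p => p ∈ dcoset' H r) with hQ
      -- ψ maps into Q
      have hψQ : ∀ h (hh : h ∈ HF), ψ h hh ∈ Q := by
        intro h hh
        rw [hQ, Finset.mem_filter]
        refine ⟨hψP h hh, ?_⟩
        have := (rq_eq_iff H _ _).mp (hψeq h hh)
        -- ψ h * (r*h)⁻¹ ∈ H
        refine ⟨ψ h hh * (r * h)⁻¹, this, h, (hmemHF h).mp hh, ?_⟩
        group
      -- ψ injective
      have hψinj : ∀ h (hh : h ∈ HF) h' (hh' : h' ∈ HF), ψ h hh = ψ h' hh' → h = h' := by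
        intro h hh h' hh' he
        have h1 := hψeq h hh
        have h2 := hψeq h' hh'
        rw [he] at h1
        have h3 : (((r * h)⁻¹ : G) : G ⧸ H) = (((r * h')⁻¹ : G) : G ⧸ H) := by
          rw [← h1, h2]
        have h4 := (rq_eq_iff H _ _).mp h3
        have h5 : r * (h * h'⁻¹) * r⁻¹ ∈ H := by
          have : (r * h) * (r * h')⁻¹ = r * (h * h'⁻¹) * r⁻¹ := by group
          rwa [this] at h4
        have h6 := hmal r hrH (h * h'⁻¹)
          (H.mul_mem ((hmemHF h).mp hh) (H.inv_mem ((hmemHF h').mp hh'))) h5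
        have : h * h'⁻¹ = 1 := h6
        group at this
        exact mul_inv_eq_one.mp (by rwa [] at this)
      -- χ : Q → HF.erase 1
      have hχ : ∀ p ∈ Q, ∃ h₁, h₁ ∈ H ∧ h₁ ≠ 1 ∧ ∃ h₂ ∈ H, p = h₁ * r * h₂ := by
        intro p hp
        rw [hQ, Finset.mem_filter] at hp
        obtain ⟨h₁, hh₁, h₂, hh₂, hpe⟩ := hp.2
        refine ⟨h₁, hh₁, ?_, h₂, hh₂, hpe⟩
        intro he1
        rw [he1, one_mul] at hpe
        apply hq
        rw [Finset.mem_image]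
        refine ⟨p, hp.1, ?_⟩
        rw [lq_eq_iff, hpe]
        simpa using H.inv_mem hh₂
      choose χ hχH hχ1 hχwit using hχ
      -- χ injective on Q
      have hχinj : ∀ p (hp : p ∈ Q) p' (hp' : p' ∈ Q), χ p hp = χ p' hp' → p = p' := by
        intro p hp p' hp' he
        obtain ⟨h₂, hh₂, hpe⟩ := hχwit p hp
        obtain ⟨h₂', hh₂', hpe'⟩ := hχwit p' hp'
        have hPp : p ∈ P := (Finset.mem_filter.mp hp).1
        have hPp' : p' ∈ P := (Finset.mem_filter.mp hp').1
        apply hLD hPp hPp'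
        rw [lq_eq_iff, hpe, hpe', he]
        have : (χ p' hp' * r * h₂)⁻¹ * (χ p' hp' * r * h₂') = h₂⁻¹ * h₂' := by group
        rw [this]
        exact H.mul_mem (H.inv_mem hh₂) hh₂'
      -- cardinalities
      have hcard1 : HF.card ≤ Q.card := by
        apply Finset.card_le_card_of_injOn (fun h => if hh : h ∈ HF then ψ h hh else 1)
        · intro h hh
          simp only [Finset.mem_coe] at hh
          simp only [dif_pos hh, Finset.mem_coe]
          exact hψQ h hh
        · intro a ha b hb he
          simp only [Finset.mem_coe] at ha hb
          simp only [dif_pos ha, dif_pos hb] at he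
          exact hψinj a ha b hb he
      have hcard2 : Q.card ≤ (HF.erase 1).card := by
        apply Finset.card_le_card_of_injOn (fun p => if hp : p ∈ Q then χ p hp else 1)
        · intro p hp
          simp only [Finset.mem_coe] at hp
          simp only [dif_pos hp]
          rw [Finset.mem_coe, Finset.mem_erase]
          exact ⟨hχ1 p hp, (hmemHF _).mpr (hχH p hp)⟩
        · intro a ha b hb he
          simp only [Finset.mem_coe] at ha hb
          simp only [dif_pos ha, dif_pos hb] at he
          exact hχinj a ha b hb he
      have h1HF : (1 : G) ∈ HF := (hmemHF 1).mpr H.one_mem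
      have hcard3 : (HF.erase 1).card = HF.card - 1 := Finset.card_erase_of_mem h1HF
      have hpos : 0 < HF.card := Finset.card_pos.mpr ⟨1, h1HF⟩
      omega
    obtain ⟨h₂, hh₂, hnew⟩ := hmissing
    set w := r * h₂ with hw
    have hwq : ((w : G ⧸ H)) = ((r : G ⧸ H)) := by
      rw [lq_eq_iff]
      have : w⁻¹ * r = h₂⁻¹ * (r⁻¹ * r) * 1 := by rw [hw]; group
      rw [this]
      simpa using H.inv_mem hh₂
    have hwP : w ∉ P := by
      intro hc
      apply hq
      rw [Finset.mem_image]
      exact ⟨w, hc, hwq⟩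
    have hwnotimg : ∀ p ∈ P, ((p : G ⧸ H)) ≠ ((w : G ⧸ H)) := by
      intro p hp hc
      apply hq
      rw [Finset.mem_image]
      exact ⟨p, hp, hc.trans hwq⟩
    set P' := insert w P with hP'
    have hcardP' : P'.card = P.card + 1 := Finset.card_insert_of_notMem hwP
    have hLD' : Set.InjOn (fun x : G => ((x : G ⧸ H))) ↑P' := by
      intro a ha b hb he
      simp only [hP', Finset.coe_insert, Set.mem_insert_iff, Finset.mem_coe] at ha hb
      rcases ha with rfl | ha <;> rcases hb with rfl | hb
      · rfl
      · exact absurd (he.symm) (hwnotimg b hb)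
      · exact absurd he (hwnotimg a ha)
      · exact hLD ha hb he
    have hRD' : Set.InjOn (fun x : G => ((x⁻¹ : G) : G ⧸ H)) ↑P' := by
      intro a ha b hb he
      simp only [hP', Finset.coe_insert, Set.mem_insert_iff, Finset.mem_coe] at ha hb
      rcases ha with rfl | ha <;> rcases hb with rfl | hb
      · rfl
      · exact absurd (he.symm) (hnew b hb)
      · exact absurd he (hnew a ha)
      · exact hRD ha hb he
    have hH' : ∃ x ∈ P', x ∈ H :=
      ⟨x₀, Finset.mem_insert_of_mem hx₀P, hx₀H⟩
    obtain ⟨T, hT1, hT2, hT3, hT4, hT5⟩ := ihk P' (by omega) (by omega) hLD' hRD' hH'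
    exact ⟨T, (Finset.subset_insert w P).trans hT1, hT2, hT3, hT4, hT5⟩
end M4
section M5
variable {G : Type*} [Group G] {H : Subgroup G}
variable (hmal : ∀ g : G, g ∉ H → ∀ x ∈ H, g * x * g⁻¹ ∈ H → x = 1)

include hmal in
theorem card_H_le [Finite G] {γ : G} (hγ : γ ∉ H) :
    Nat.card H ≤ H.index - 1 := by
  haveI : Fintype G := Fintype.ofFinite G
  haveI : Fintype (G ⧸ H) := Fintype.ofFinite _
  have hidx : H.index = Fintype.card (G ⧸ H) := by
    rw [Subgroup.index, Nat.card_eq_fintype_card]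
  set HF : Finset G := Set.toFinset (H : Set G) with hHF
  have hmemHF : ∀ x : G, x ∈ HF ↔ x ∈ H := by
    intro x
    rw [hHF, Set.mem_toFinset]
    rfl
  have hbridge : Nat.card H = HF.card := by
    rw [hHF, Set.toFinset_card, Nat.card_eq_fintype_card]
    exact Fintype.card_congr (Equiv.subtypeEquivRight (fun x => Iff.rfl))
  have hinj : HF.card ≤ ((Finset.univ : Finset (G ⧸ H)).erase ((1 : G) : G ⧸ H)).card := by
    apply Finset.card_le_card_of_injOn (fun h => ((h * γ : G) : G ⧸ H))
    · intro h hh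
      simp only [Finset.mem_coe] at hh
      rw [Finset.mem_coe, Finset.mem_erase]
      refine ⟨?_, Finset.mem_univ _⟩
      intro hc
      rw [lq_eq_iff] at hc
      have : γ⁻¹ ∈ H := by
        have h2 : (h * γ)⁻¹ * 1 = γ⁻¹ * h⁻¹ := by group
        rw [h2] at hc
        have := H.mul_mem hc ((hmemHF h).mp hh)
        simpa using this
      exact hγ (by simpa using H.inv_mem this)
    · intro a ha b hb he
      simp only [Finset.mem_coe] at ha hb
      simp only at he
      rw [lq_eq_iff] at he
      have h2 : (a * γ)⁻¹ * (b * γ) = γ⁻¹ * (a⁻¹ * b) * γ := by group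
      rw [h2] at he
      have := mal_cancel' hmal hγ (H.mul_mem (H.inv_mem ((hmemHF a).mp ha))
        ((hmemHF b).mp hb)) he
      exact inv_mul_eq_one.mp this
  have herase : ((Finset.univ : Finset (G ⧸ H)).erase ((1 : G) : G ⧸ H)).card =
      H.index - 1 := by
    rw [Finset.card_erase_of_mem (Finset.mem_univ _), Finset.card_univ, hidx]
  omega

include hmal in
theorem exists_generating_transversal [Finite G] (hne : H ≠ ⊤) :
    ∃ T : Finset G, T.card = H.index ∧
      Set.InjOn (fun x : G => ((x : G ⧸ H))) ↑T ∧
      Set.InjOn (fun x : G => ((x⁻¹ : G) : G ⧸ H)) ↑T ∧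
      Subgroup.closure (↑T : Set G) = ⊤ := by
  haveI : Fintype G := Fintype.ofFinite G
  haveI : Fintype (G ⧸ H) := Fintype.ofFinite _
  have hidx : H.index = Fintype.card (G ⧸ H) := by
    rw [Subgroup.index, Nat.card_eq_fintype_card]
  -- γ outside H
  obtain ⟨γ, hγ⟩ : ∃ γ : G, γ ∉ H := by
    by_contra hc
    push_neg at hc
    exact hne ((Subgroup.eq_top_iff' H).mpr hc)
  -- index bounds
  have hidxpos : 0 < H.index := by
    rw [hidx]
    exact Fintype.card_pos
  have hidx1 : H.index ≠ 1 := fun hc => hne (Subgroup.index_eq_one.mp hc)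
  have hidx2 : 2 ≤ H.index := by omega
  -- irredundant list for H
  set HF : Finset G := Set.toFinset (H : Set G) with hHF
  have hmemHF : ∀ x : G, x ∈ HF ↔ x ∈ H := by
    intro x
    rw [hHF, Set.mem_toFinset]
    rfl
  obtain ⟨hs, hnodup, hmemhs, hclhs, hstrict⟩ := exists_irred_list HF.card HF rfl
  have hclhs' : Subgroup.closure {x : G | x ∈ hs} = H := by
    rw [hclhs]
    have : (HF : Set G) = (H : Set G) := by
      rw [hHF]
      exact Set.coe_toFinset _
    rw [this, Subgroup.closure_eq]
  set e := hs.length with he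
  set hfun : ℕ → G := fun i => hs.getD i 1 with hhfun
  have hfun_get : ∀ i (hi : i < e), hfun i = hs.get ⟨i, hi⟩ := by
    intro i hi
    rw [hhfun]
    simp only [List.getD_eq_getElem?_getD, List.getElem?_eq_getElem hi]
    rfl
  have hfunH : ∀ i, i < e → hfun i ∈ H := by
    intro i hi
    rw [hfun_get i hi]
    exact (hmemHF _).mp (hmemhs _ (hs.get_mem _))
  have hfun1 : ∀ i, i < e → hfun i ≠ 1 := by
    intro i hi hc
    apply hstrict i hi
    rw [← hfun_get i hi, hc]
    exact Subgroup.one_mem _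
  have hfuninj : ∀ i, i < e → ∀ k, k < e → hfun i = hfun k → i = k := by
    intro i hi k hk hik
    rw [hfun_get i hi, hfun_get k hk] at hik
    have := List.nodup_iff_injective_get.mp hnodup hik
    exact Fin.mk.inj_iff.mp this
  -- chain bound : 2^e ≤ |H|
  have hchainH : ChainCond hs := fun i hi => Or.inr (hstrict i hi)
  have h2e : e = 0 ∨ 2 ^ e ≤ Nat.card H := by
    rcases chain_card hchainH e (le_refl _) with htop | hcard
    · exfalso
      rw [List.take_length] at htop
      rw [hclhs'] at htop
      exact hne htop
    · right
      rw [List.take_length, hclhs'] at hcard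
      exact hcard
  have hHle : Nat.card H ≤ H.index - 1 := card_H_le hmal hγ
  have hecard : e + 1 ≤ H.index := by
    rcases h2e with h0 | h2
    · omega
    · have : e < 2 ^ e := Nat.lt_two_pow_self
      omega
  -- the gadget cells
  set x0 : G := hfun 0 with hx0
  have hx0H : x0 ∈ H := by
    rcases Nat.eq_zero_or_pos e with h0 | hpos
    · have hnil : hs = [] := List.length_eq_zero_iff.mp (by omega)
      rw [hx0, hhfun, hnil]
      simp only [List.getD_nil]
      exact H.one_mem
    · exact hfunH 0 hpos
  set v : ℕ → G := fun i => hfun (i+1) * γ * (hfun i)⁻¹ with hv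
  set P0 : Finset G := insert x0 (insert γ ((Finset.range (e-1)).image v)) with hP0
  -- helper : elements of v-image have index bounds
  have hviH : ∀ i, i < e - 1 → (hfun (i+1) ∈ H ∧ hfun (i+1) ≠ 1 ∧ hfun i ∈ H ∧ hfun i ≠ 1) := by
    intro i hi
    exact ⟨hfunH _ (by omega), hfun1 _ (by omega), hfunH _ (by omega), hfun1 _ (by omega)⟩
  -- left-coset distinctness facts
  have d1 : ¬ ((x0 : G ⧸ H) = (γ : G ⧸ H)) := by
    intro hc
    rw [lq_eq_iff] at hc
    exact hγ (by
      have : γ = x0 * (x0⁻¹ * γ) := by group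
      rw [this]
      exact H.mul_mem hx0H hc)
  have d2 : ∀ i, i < e - 1 → ¬ ((x0 : G ⧸ H) = (v i : G ⧸ H)) := by
    intro i hi hc
    obtain ⟨hA, hA1, hB, hB1⟩ := hviH i hi
    rw [lq_eq_iff] at hc
    apply hγ
    have hvi : v i ∈ H := by
      have : v i = x0 * (x0⁻¹ * v i) := by group
      rw [this]
      exact H.mul_mem hx0H hc
    have : γ = (hfun (i+1))⁻¹ * v i * hfun i := by rw [hv]; group
    rw [this]
    exact H.mul_mem (H.mul_mem (H.inv_mem hA) hvi) hB
  have d3 : ∀ i, i < e - 1 → ¬ ((γ : G ⧸ H) = (v i : G ⧸ H)) := by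
    intro i hi hc
    obtain ⟨hA, hA1, hB, hB1⟩ := hviH i hi
    rw [lq_eq_iff] at hc
    have h2 : γ⁻¹ * hfun (i+1) * γ ∈ H := by
      have : γ⁻¹ * hfun (i+1) * γ = (γ⁻¹ * v i) * hfun i := by rw [hv]; group
      rw [this]
      exact H.mul_mem hc hB
    exact hA1 (mal_cancel' hmal hγ hA h2)
  have d4 : ∀ i, i < e - 1 → ∀ k, k < e - 1 → ((v i : G ⧸ H) = (v k : G ⧸ H)) → i = k := by
    intro i hi k hk hc
    obtain ⟨hA, hA1, hB, hB1⟩ := hviH i hi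
    obtain ⟨hA', hA1', hB', hB1'⟩ := hviH k hk
    rw [lq_eq_iff] at hc
    have h2 : γ⁻¹ * ((hfun (i+1))⁻¹ * hfun (k+1)) * γ ∈ H := by
      have : γ⁻¹ * ((hfun (i+1))⁻¹ * hfun (k+1)) * γ =
          (hfun i)⁻¹ * ((v i)⁻¹ * v k) * hfun k := by rw [hv]; group
      rw [this]
      exact H.mul_mem (H.mul_mem (H.inv_mem hB) hc) hB'
    have h3 := mal_cancel' hmal hγ (H.mul_mem (H.inv_mem hA) hA') h2
    have h4 : hfun (i+1) = hfun (k+1) := by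
      have := inv_mul_eq_one.mp h3
      exact this
    have := hfuninj (i+1) (by omega) (k+1) (by omega) h4
    omega
  -- right-coset distinctness facts
  have r1 : ¬ (((x0⁻¹ : G) : G ⧸ H) = ((γ⁻¹ : G) : G ⧸ H)) := by
    intro hc
    rw [rq_eq_iff] at hc
    apply hγ
    have : γ = (x0 * γ⁻¹)⁻¹ * x0 := by group
    rw [this]
    exact H.mul_mem (H.inv_mem hc) hx0H
  have r2 : ∀ i, i < e - 1 → ¬ (((x0⁻¹ : G) : G ⧸ H) = (((v i)⁻¹ : G) : G ⧸ H)) := by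
    intro i hi hc
    obtain ⟨hA, hA1, hB, hB1⟩ := hviH i hi
    rw [rq_eq_iff] at hc
    apply hγ
    have hKey : γ⁻¹ = (x0 * hfun i)⁻¹ * (x0 * (v i)⁻¹) * hfun (i+1) := by rw [hv]; group
    have : γ⁻¹ ∈ H := by
      rw [hKey]
      exact H.mul_mem (H.mul_mem (H.inv_mem (H.mul_mem hx0H hB)) hc) hA
    simpa using H.inv_mem this
  have r3 : ∀ i, i < e - 1 → ¬ (((γ⁻¹ : G) : G ⧸ H) = (((v i)⁻¹ : G) : G ⧸ H)) := by
    intro i hi hc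
    obtain ⟨hA, hA1, hB, hB1⟩ := hviH i hi
    rw [rq_eq_iff] at hc
    have h2 : γ * hfun i * γ⁻¹ ∈ H := by
      have : γ * hfun i * γ⁻¹ = (γ * (v i)⁻¹) * hfun (i+1) := by rw [hv]; group
      rw [this]
      exact H.mul_mem hc hA
    exact hB1 (mal_cancel hmal hγ hB h2)
  have r4 : ∀ i, i < e - 1 → ∀ k, k < e - 1 →
      ((((v i)⁻¹ : G) : G ⧸ H) = (((v k)⁻¹ : G) : G ⧸ H)) → i = k := by
    intro i hi k hk hc
    obtain ⟨hA, hA1, hB, hB1⟩ := hviH i hi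
    obtain ⟨hA', hA1', hB', hB1'⟩ := hviH k hk
    rw [rq_eq_iff] at hc
    have h2 : γ * ((hfun i)⁻¹ * hfun k) * γ⁻¹ ∈ H := by
      have : γ * ((hfun i)⁻¹ * hfun k) * γ⁻¹ =
          (hfun (i+1))⁻¹ * (v i * (v k)⁻¹) * hfun (k+1) := by rw [hv]; group
      rw [this]
      exact H.mul_mem (H.mul_mem (H.inv_mem hA) hc) hA'
    have h3 := mal_cancel hmal hγ (H.mul_mem (H.inv_mem hB) hB') h2
    have h4 : hfun i = hfun k := inv_mul_eq_one.mp h3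
    exact hfuninj i (by omega) k (by omega) h4
  -- membership description of P0
  have hmemP0 : ∀ x : G, x ∈ P0 ↔ x = x0 ∨ x = γ ∨ ∃ i, i < e - 1 ∧ x = v i := by
    intro x
    rw [hP0]
    simp only [Finset.mem_insert, Finset.mem_image, Finset.mem_range]
    constructor
    · rintro (h | h | ⟨i, hi, rfl⟩)
      · exact Or.inl h
      · exact Or.inr (Or.inl h)
      · exact Or.inr (Or.inr ⟨i, hi, rfl⟩)
    · rintro (h | h | ⟨i, hi, rfl⟩)
      · exact Or.inl h
      · exact Or.inr (Or.inl h)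
      · exact Or.inr (Or.inr ⟨i, hi, rfl⟩)
  -- InjOn for P0
  have hLD0 : Set.InjOn (fun x : G => ((x : G ⧸ H))) ↑P0 := by
    intro a ha b hb hab
    simp only [Finset.mem_coe] at ha hb
    simp only at hab
    rcases (hmemP0 a).mp ha with rfl | rfl | ⟨i, hi, rfl⟩ <;>
      rcases (hmemP0 b).mp hb with rfl | rfl | ⟨k, hk, rfl⟩
    · rfl
    · exact absurd hab d1
    · exact absurd hab (d2 k hk)
    · exact absurd hab.symm d1
    · rfl
    · exact absurd hab (d3 k hk)
    · exact absurd hab.symm (d2 i hi)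
    · exact absurd hab.symm (d3 i hi)
    · rw [d4 i hi k hk hab]
  have hRD0 : Set.InjOn (fun x : G => ((x⁻¹ : G) : G ⧸ H)) ↑P0 := by
    intro a ha b hb hab
    simp only [Finset.mem_coe] at ha hb
    simp only at hab
    rcases (hmemP0 a).mp ha with rfl | rfl | ⟨i, hi, rfl⟩ <;>
      rcases (hmemP0 b).mp hb with rfl | rfl | ⟨k, hk, rfl⟩
    · rfl
    · exact absurd hab r1
    · exact absurd hab (r2 k hk)
    · exact absurd hab.symm r1
    · rfl
    · exact absurd hab (r3 k hk)
    · exact absurd hab.symm (r2 i hi)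
    · exact absurd hab.symm (r3 i hi)
    · rw [r4 i hi k hk hab]
  -- card bound
  have hcardP0 : P0.card ≤ H.index := by
    rw [hP0]
    calc (insert x0 (insert γ ((Finset.range (e-1)).image v))).card
        ≤ (insert γ ((Finset.range (e-1)).image v)).card + 1 := Finset.card_insert_le _ _
    _ ≤ ((Finset.range (e-1)).image v).card + 1 + 1 := by
        have := Finset.card_insert_le γ ((Finset.range (e-1)).image v)
        omega
    _ ≤ (e - 1) + 2 := by
        have h1 : ((Finset.range (e-1)).image v).card ≤ e - 1 := by
          calc ((Finset.range (e-1)).image v).card ≤ (Finset.range (e-1)).card :=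
            Finset.card_image_le
          _ = e - 1 := Finset.card_range _
        omega
    _ ≤ H.index := by
        rcases Nat.eq_zero_or_pos e with h0 | hpos
        · omega
        · omega
  -- complete to a full transversal
  obtain ⟨T, hsub, hTcard, hTLD, hTRD, hTH⟩ := completion hmal (H.index - P0.card) P0 rfl
    hcardP0 hLD0 hRD0 ⟨x0, by rw [hmemP0]; exact Or.inl rfl, hx0H⟩
  refine ⟨T, hTcard, hTLD, hTRD, ?_⟩
  -- generation
  have hγT : γ ∈ T := hsub (by rw [hmemP0]; exact Or.inr (Or.inl rfl))
  have hx0T : x0 ∈ T := hsub (by rw [hmemP0]; exact Or.inl rfl)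
  have hgen1 : ∀ i, i < e → hfun i ∈ Subgroup.closure (↑T : Set G) := by
    intro i
    induction i with
    | zero =>
      intro _
      exact Subgroup.subset_closure hx0T
    | succ i ihi =>
      intro hi
      have hvi : v i ∈ T := hsub (by
        rw [hmemP0]
        exact Or.inr (Or.inr ⟨i, by omega, rfl⟩))
      have heq : hfun (i+1) = v i * hfun i * γ⁻¹ := by rw [hv]; group
      rw [heq]
      exact Subgroup.mul_mem _ (Subgroup.mul_mem _ (Subgroup.subset_closure hvi)
        (ihi (by omega))) (Subgroup.inv_mem _ (Subgroup.subset_closure hγT))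
  have hHsub : H ≤ Subgroup.closure (↑T : Set G) := by
    rw [← hclhs']
    rw [Subgroup.closure_le]
    intro x hx
    simp only [Set.mem_setOf_eq] at hx
    obtain ⟨⟨i, hi⟩, rfl⟩ := List.mem_iff_get.mp hx
    rw [← hfun_get i hi]
    exact hgen1 i hi
  -- rows of T cover everything
  have himgT : T.image (fun x : G => ((x : G ⧸ H))) = Finset.univ := by
    apply Finset.eq_univ_of_card
    rw [Finset.card_image_of_injOn hTLD, hTcard, hidx]
  rw [eq_top_iff]
  intro g _
  have : ((g : G ⧸ H)) ∈ T.image (fun x : G => ((x : G ⧸ H))) := by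
    rw [himgT]
    exact Finset.mem_univ _
  rw [Finset.mem_image] at this
  obtain ⟨t, htT, hte⟩ := this
  have htg : t⁻¹ * g ∈ H := (lq_eq_iff H t g).mp hte
  have : g = t * (t⁻¹ * g) := by group
  rw [this]
  exact Subgroup.mul_mem _ (Subgroup.subset_closure htT) (hHsub htg)
end M5
section M6
variable {G : Type*} [Group G]

theorem nat_two_mul_le : ∀ m : ℕ, 2 * (m + 2) ≤ 2 ^ (m + 2) := by
  intro m
  induction m with
  | zero => norm_num
  | succ m ihm =>
    have h2 : (2:ℕ) ≤ 2 ^ (m + 2) := by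
      calc (2:ℕ) = 2 ^ 1 := by norm_num
      _ ≤ 2 ^ (m + 2) := Nat.pow_le_pow_right (by norm_num) (by omega)
    calc 2 * (m + 1 + 2) = 2 * (m + 2) + 2 := by ring
    _ ≤ 2 ^ (m + 2) + 2 ^ (m + 2) := by omega
    _ = 2 ^ (m + 1 + 2) := by ring

theorem nat_pow_ineq' : ∀ m : ℕ, (m + 2) * (m + 1) < 2 ^ (m + 2) := by
  intro m
  induction m with
  | zero => norm_num
  | succ m ihm =>
    have h2 := nat_two_mul_le m
    calc (m + 1 + 2) * (m + 1 + 1) = (m + 2) * (m + 1) + 2 * (m + 2) := by ring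
    _ < 2 ^ (m + 2) + 2 ^ (m + 2) := by omega
    _ = 2 ^ (m + 1 + 2) := by ring

theorem nat_pow_ineq (n : ℕ) (hn : 2 ≤ n) : n * (n - 1) < 2 ^ n := by
  obtain ⟨m, rfl⟩ : ∃ m, n = m + 2 := ⟨n - 2, by omega⟩
  have := nat_pow_ineq' m
  have he : m + 2 - 1 = m + 1 := by omega
  rw [he]
  exact this

theorem stmt3' (H : Subgroup G) [H.FiniteIndex]
    (hmal : ∀ g : G, g ∉ H → ∀ x ∈ H, g * x * g⁻¹ ∈ H → x = 1)
    (S : Multiset G) (hcard : S.card = H.index)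
    (hgen : Subgroup.closure {x : G | x ∈ S} = ⊤) :
    ∃ S' : Multiset G, NielsenEquiv S S' ∧
      ((S'.map fun x => ((x : G) : G ⧸ H)).Nodup) ∧
      ((S'.map fun x => ((x⁻¹ : G) : G ⧸ H)).Nodup) ∧
      (∀ g : G, ∃! t, t ∈ {x : G | x ∈ S'} ∧ ((t : G) : G ⧸ H) = ((g : G) : G ⧸ H)) ∧
      (∀ g : G, ∃! t, t ∈ {x : G | x ∈ S'} ∧ ((t⁻¹ : G) : G ⧸ H) = ((g⁻¹ : G) : G ⧸ H)) := by
  by_cases hn1 : H.index = 1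
  · -- trivial case : H = ⊤
    have hHtop : H = ⊤ := Subgroup.index_eq_one.mp hn1
    subst hHtop
    have hcard1 : S.card = 1 := by rw [hcard, hn1]
    obtain ⟨a, rfl⟩ := Multiset.card_eq_one.mp hcard1
    haveI : Subsingleton (G ⧸ (⊤ : Subgroup G)) := QuotientGroup.subsingleton_quotient_top
    refine ⟨{a}, Relation.ReflTransGen.refl, by simp, by simp, ?_, ?_⟩
    · intro g
      refine ⟨a, ⟨by simp, Subsingleton.elim _ _⟩, ?_⟩
      intro b hb
      have := hb.1
      simpa using this
    · intro g
      refine ⟨a, ⟨by simp, Subsingleton.elim _ _⟩, ?_⟩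
      intro b hb
      have := hb.1
      simpa using this
  · -- main case
    have hne : H ≠ ⊤ := by
      intro hc
      rw [hc, Subgroup.index_top] at hn1
      exact hn1 rfl
    obtain ⟨γ₀, hγ₀⟩ : ∃ γ : G, γ ∉ H := by
      by_contra hc
      push_neg at hc
      exact hne ((Subgroup.eq_top_iff' H).mpr hc)
    -- G is finite
    haveI hfinG : Finite G := by
      have hinj : Function.Injective (MulAction.toPermHom G (G ⧸ H)) := by
        rw [← MonoidHom.ker_eq_bot_iff, eq_bot_iff]
        intro g hg
        rw [MonoidHom.mem_ker] at hg
        have hact : ∀ x : G, ((g * x : G) : G ⧸ H) = ((x : G) : G ⧸ H) := by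
          intro x
          have := congrArg (fun (p : Equiv.Perm (G ⧸ H)) => p ((x : G) : G ⧸ H)) hg
          simpa using this
        have hgH : g ∈ H := by
          have := hact 1
          rw [mul_one] at this
          rw [lq_eq_iff] at this
          simpa using H.inv_mem this
        have h2 : γ₀ * g⁻¹ * γ₀⁻¹ ∈ H := by
          have := hact γ₀⁻¹
          rw [lq_eq_iff] at this
          have he : (g * γ₀⁻¹)⁻¹ * γ₀⁻¹ = γ₀ * g⁻¹ * γ₀⁻¹ := by group
          rwa [he] at this
        have := hmal γ₀ hγ₀ g⁻¹ (H.inv_mem hgH) h2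
        rw [Subgroup.mem_bot]
        simpa using congrArg (·⁻¹) this
      exact Finite.of_injective _ hinj
    -- cardinality bounds
    have hidxpos : H.index ≠ 0 := Subgroup.FiniteIndex.index_ne_zero
    have hidx2 : 2 ≤ H.index := by omega
    have hHle : Nat.card H ≤ H.index - 1 := card_H_le hmal hγ₀
    have hGcard : Nat.card ↥H * H.index = Nat.card G := Subgroup.card_mul_index H
    have hGle : Nat.card G ≤ H.index * (H.index - 1) := by
      calc Nat.card G = Nat.card ↥H * H.index := hGcard.symm
      _ ≤ (H.index - 1) * H.index := Nat.mul_le_mul_right _ hHle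
      _ = H.index * (H.index - 1) := by ring
    have hGlt : Nat.card G < 2 ^ H.index :=
      lt_of_le_of_lt hGle (nat_pow_ineq H.index hidx2)
    -- generating left-right transversal
    obtain ⟨T, hTcard, hTLD, hTRD, hTgen⟩ := exists_generating_transversal hmal hne
    -- irredundant prefix
    obtain ⟨l0, hl0nodup, hl0mem, hl0cl, hl0strict⟩ := exists_irred_list T.card T rfl
    have hl0sub : l0.toFinset ⊆ T := by
      intro x hx
      rw [List.mem_toFinset] at hx
      exact hl0mem x hx
    set lrest := (T \ l0.toFinset).toList with hlrest
    set l := l0 ++ lrest with hl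
    have hdisj : Disjoint l0.toFinset (T \ l0.toFinset) := Finset.disjoint_sdiff
    have hTsplit : l0.toFinset.disjUnion (T \ l0.toFinset) hdisj = T := by
      apply Finset.ext
      intro x
      rw [Finset.mem_disjUnion, Finset.mem_sdiff]
      constructor
      · rintro (h | h)
        · exact hl0sub h
        · exact h.1
      · intro h
        by_cases hx : x ∈ l0.toFinset
        · exact Or.inl hx
        · exact Or.inr ⟨h, hx⟩
    have hlval : (↑l : Multiset G) = T.val := by
      rw [hl]
      have h1 : (↑(l0 ++ lrest) : Multiset G) = (↑l0 : Multiset G) + ↑lrest := by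
        rw [← Multiset.coe_add]
      rw [h1]
      have h2 : (↑l0 : Multiset G) = l0.toFinset.val := by
        show (↑l0 : Multiset G) = (↑l0 : Multiset G).dedup
        exact (Multiset.dedup_eq_self.mpr (Multiset.coe_nodup.mpr hl0nodup)).symm
      have h3 : (↑lrest : Multiset G) = (T \ l0.toFinset).val := by
        rw [hlrest]
        exact Finset.coe_toList _
      have h4 : T.val = l0.toFinset.val + (T \ l0.toFinset).val := by
        conv_lhs => rw [← hTsplit]
        rfl
      rw [h2, h3, h4]
    have hllen : l.length = H.index := by
      have : (↑l : Multiset G).card = T.val.card := by rw [hlval]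
      rw [Multiset.coe_card] at this
      rw [this]
      exact hTcard
    -- chain condition
    have hchain : ChainCond l := by
      intro i hi
      by_cases hil : i < l0.length
      · right
        have htake : l.take i = l0.take i :=
          List.take_append_of_le_length (by omega)
        have hget : l.get ⟨i, hi⟩ = l0.get ⟨i, hil⟩ := by simp only [List.get_eq_getElem]; exact List.getElem_append_left hil
        rw [htake, hget]
        exact hl0strict i hil
      · left
        push_neg at hil
        apply top_unique
        rw [← hTgen, ← hl0cl]
        apply Subgroup.closure_mono
        intro z hz
        simp only [Set.mem_setOf_eq] at hz ⊢
        rw [hl, List.take_append, List.take_of_length_le (by omega)]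
        exact List.mem_append_left _ hz
    -- run the process
    have h0 : (↑(l.take 0) : Multiset G) + S = S := by
      rw [List.take_zero, Multiset.coe_nil, zero_add]
    have hproc := process l hchain (by rw [hllen]; exact hGlt) l.length 0 (by omega) S
      (by rw [hcard, hllen]) (by
        have hseteq : {x : G | x ∈ (↑(l.take 0) : Multiset G) + S} = {x : G | x ∈ S} := by
          rw [h0]
        rw [hseteq]
        exact hgen)
    rw [h0] at hproc
    -- final assembly
    haveI : Fintype G := Fintype.ofFinite G
    haveI : Fintype (G ⧸ H) := Fintype.ofFinite _
    have hidx : H.index = Fintype.card (G ⧸ H) := by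
      rw [Subgroup.index, Nat.card_eq_fintype_card]
    have hmemval : ∀ x : G, x ∈ T.val ↔ x ∈ T := fun x => Iff.rfl
    have hset : {x : G | x ∈ (↑l : Multiset G)} = (↑T : Set G) := by
      rw [hlval]
      ext x
      simp only [Set.mem_setOf_eq, Finset.mem_coe]
      exact hmemval x
    refine ⟨↑l, hproc, ?_, ?_, ?_, ?_⟩
    · rw [hlval]
      apply Multiset.Nodup.map_on
      · intro x hx y hy hxy
        exact hTLD ((hmemval x).mp hx) ((hmemval y).mp hy) hxy
      · exact T.nodup
    · rw [hlval]
      apply Multiset.Nodup.map_on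
      · intro x hx y hy hxy
        exact hTRD ((hmemval x).mp hx) ((hmemval y).mp hy) hxy
      · exact T.nodup
    · -- left transversal
      intro g
      have himgT : T.image (fun x : G => ((x : G ⧸ H))) = Finset.univ := by
        apply Finset.eq_univ_of_card
        rw [Finset.card_image_of_injOn hTLD, hTcard, hidx]
      have : ((g : G ⧸ H)) ∈ T.image (fun x : G => ((x : G ⧸ H))) := by
        rw [himgT]
        exact Finset.mem_univ _
      rw [Finset.mem_image] at this
      obtain ⟨t, htT, hte⟩ := this
      refine ⟨t, ⟨by rw [hset]; exact htT, hte⟩, ?_⟩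
      intro b hb
      have hbT : b ∈ T := by
        have := hb.1
        rwa [hset] at this
      exact hTLD hbT htT (by
        simp only
        rw [hb.2, hte])
    · -- right transversal
      intro g
      have himgR : T.image (fun x : G => ((x⁻¹ : G) : G ⧸ H)) = Finset.univ := by
        apply Finset.eq_univ_of_card
        rw [Finset.card_image_of_injOn hTRD, hTcard, hidx]
      have : (((g⁻¹ : G)) : G ⧸ H) ∈ T.image (fun x : G => ((x⁻¹ : G) : G ⧸ H)) := by
        rw [himgR]
        exact Finset.mem_univ _
      rw [Finset.mem_image] at this
      obtain ⟨t, htT, hte⟩ := this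
      refine ⟨t, ⟨by rw [hset]; exact htT, hte⟩, ?_⟩
      intro b hb
      have hbT : b ∈ T := by
        have := hb.1
        rwa [hset] at this
      exact hTRD hbT htT (by
        simp only
        rw [hb.2, hte])
end M6

/-- if `H ≤ G` is malnormal of finite index and `S` is a generating
multiset of size `[G:H]`, then `S` is Nielsen equivalent to a left-right
transversal of `H` in `G`. -/
theorem stmt3 {G : Type*} [Group G] (H : Subgroup G) [H.FiniteIndex]
    (hmal : ∀ g : G, g ∉ H → ∀ x ∈ H, g * x * g⁻¹ ∈ H → x = 1)
    (S : Multiset G) (hcard : S.card = H.index)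
    (hgen : Subgroup.closure {x : G | x ∈ S} = ⊤) :
    ∃ S' : Multiset G, NielsenEquiv S S' ∧ LeftDistinct H S' ∧ RightDistinct H S' ∧
      IsLeftTransversal H {x : G | x ∈ S'} ∧ IsRightTransversal H {x : G | x ∈ S'} := by
  obtain ⟨S', h1, h2, h3, h4, h5⟩ := stmt3' H hmal S hcard hgen
  exact ⟨S', h1, h2, h3, h4, h5⟩
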